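/- For a subordinator X and every fixed a > 0, the process t ↦ U(a - X_t) 1{X_t < a} is a supermartingale with respect to the natural filtration of X, where U is the renewal function of X. -/

import Mathlib

open MeasureTheory ProbabilityTheory Filter Set
open scoped ENNReal NNReal Topology

/-- A subordinator: a Lévy process with non-decreasing right-continuous paths,
issued from the origin (and extended by `0` to negative times). -/
structure Subordinator (Ω : Type*) [MeasurableSpace Ω] (P : Measure Ω) where
  X : ℝ → Ω → ℝ
  meas : ∀ t, Measurable (X t)
  zero_of_nonpos : ∀ t : ℝ, t ≤ 0 → ∀ ω, X t ω = 0
  mono : ∀ ω, Monotone fun t => X t ω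
  rightCont : ∀ ω t, ContinuousWithinAt (fun s => X s ω) (Set.Ici t) t
  stationary : ∀ s t : ℝ, 0 ≤ s → 0 ≤ t →
      Measure.map (fun ω => X (s + t) ω - X s ω) P = Measure.map (X t) P
  indep : ∀ (n : ℕ) (ts : Fin (n + 1) → ℝ), Monotone ts →
      iIndepFun
        (fun i : Fin n => fun ω => X (ts i.succ) ω - X (ts i.castSucc) ω) P

/-- The `q`-potential function `U^(q)(x) = ∫₀^∞ e^{-qt} P(X_t ≤ x) dt` of a subordinator. -/
noncomputable def qPotential {Ω : Type*} [MeasurableSpace Ω] (P : Measure Ω)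
    (S : Subordinator Ω P) (q x : ℝ) : ℝ≥0∞ :=
  ∫⁻ t in Set.Ioi (0 : ℝ), ENNReal.ofReal (Real.exp (-q * t)) * P {ω | S.X t ω ≤ x}


/-- for every `a > 0`, the process `t ↦ U(a - X_t) 1{X_t < a}` is a
supermartingale with respect to the natural filtration of the subordinator `X`,
where `U = U^(0)` is the renewal function (assumed finite). -/
theorem renewal_supermartingale {Ω : Type*} [MeasurableSpace Ω] (P : Measure Ω)
    [IsProbabilityMeasure P] (S : Subordinator Ω P)
    (hfin : ∀ x : ℝ, qPotential P S 0 x ≠ ⊤)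
    (a : ℝ) (ha : 0 < a) :
    Supermartingale
      (fun (t : ℝ) (ω : Ω) =>
        if S.X t ω < a then (qPotential P S 0 (a - S.X t ω)).toReal else 0)
      (MeasureTheory.Filtration.natural S.X fun t => (S.meas t).stronglyMeasurable) P := by
  classical
  set ℱ := MeasureTheory.Filtration.natural S.X fun t => (S.meas t).stronglyMeasurable with hℱ
  set F : ℝ → ℝ := fun x => (qPotential P S 0 x).toReal with hF
  have hUmono : Monotone fun x => qPotential P S 0 x := by
    intro x y hxy
    refine lintegral_mono fun t => ?_
    exact mul_le_mul_right (measure_mono fun ω hω => le_trans hω hxy) _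
  have hFmono : Monotone F := fun x y hxy => ENNReal.toReal_mono (hfin y) (hUmono hxy)
  set g : ℝ → ℝ := fun x => if x < a then F (a - x) else 0 with hg
  have hfeq : (fun (t : ℝ) (ω : Ω) =>
      if S.X t ω < a then (qPotential P S 0 (a - S.X t ω)).toReal else 0)
      = fun t ω => g (S.X t ω) := rfl
  rw [hfeq]
  have hgmeas : Measurable g := by
    refine Measurable.ite (measurableSet_lt measurable_id measurable_const) ?_ measurable_const
    exact hFmono.measurable.comp (measurable_const.sub measurable_id)
  have hgnonneg : ∀ x, 0 ≤ g x := by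
    intro x; by_cases h : x < a <;> simp only [hg, if_pos, if_neg, h, ite_true, ite_false] <;>
      first | exact ENNReal.toReal_nonneg | exact le_rfl
  have hganti : Antitone g := by
    intro x y hxy
    by_cases hy : y < a
    · have hx : x < a := lt_of_le_of_lt hxy hy
      simp only [hg, if_pos hx, if_pos hy]
      exact hFmono (by linarith)
    · simp only [hg, if_neg hy]
      exact hgnonneg x
  have hXnonneg : ∀ t ω, 0 ≤ S.X t ω := by
    intro t ω
    rcases le_or_gt t 0 with h | h
    · exact (S.zero_of_nonpos t h ω).ge
    · calc (0:ℝ) = S.X 0 ω := (S.zero_of_nonpos 0 le_rfl ω).symm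
        _ ≤ S.X t ω := S.mono ω h.le
  have hadapt : StronglyAdapted ℱ (fun t ω => g (S.X t ω)) := by
    intro t
    exact (hgmeas.comp
      (Filtration.stronglyAdapted_natural (fun t => (S.meas t).stronglyMeasurable) t).measurable
      ).stronglyMeasurable
  have hbound : ∀ t ω, g (S.X t ω) ≤ F a := by
    intro t ω
    by_cases h : S.X t ω < a
    · simp only [hg, if_pos h]
      exact hFmono (by linarith [hXnonneg t ω])
    · simp only [hg, if_neg h]; exact ENNReal.toReal_nonneg
  have hint : ∀ t, Integrable (fun ω => g (S.X t ω)) P := by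
    intro t
    refine Integrable.mono' (integrable_const (F a))
      ((hadapt t).mono (ℱ.le t)).aestronglyMeasurable ?_
    exact Filter.Eventually.of_forall fun ω => by
      rw [Real.norm_eq_abs, abs_of_nonneg (hgnonneg _)]; exact hbound t ω
  refine ⟨hadapt, ?_, hint⟩
  intro i j hij
  have hle : (fun ω => g (S.X j ω)) ≤ᵐ[P] fun ω => g (S.X i ω) :=
    Filter.Eventually.of_forall fun ω => hganti (S.mono ω hij)
  have h1 := condExp_mono (μ := P) (m := ℱ i) (hint j) (hint i) hle
  have h2 : P[(fun ω => g (S.X i ω)) | ℱ i] = fun ω => g (S.X i ω) :=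
    condExp_of_stronglyMeasurable (ℱ.le i) (hadapt i) (hint i)
  rw [h2] at h1; exact h1
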